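/- Fix n ≥ 1 experts, z ≥ 2 outcomes, and ε > 0. Let F⁽⁰⁾ be an n×z row-stochastic matrix whose i-th row f_i⁽⁰⁾ is expert i's initial opinion. For t ≥ 1 define the weights p_{i,j}⁽ᵗ⁾ = (ε + D(f_i⁽ᵗ⁻¹⁾, f_j⁽ᵗ⁻¹⁾))⁻¹ / Σ_{k=1}^{n} (ε + D(f_i⁽ᵗ⁻¹⁾, f_k⁽ᵗ⁻¹⁾))⁻¹ and the updated opinions f_i⁽ᵗ⁾ = Σ_{j=1}^{n} p_{i,j}⁽ᵗ⁾ · f_j⁽ᵗ⁻¹⁾, where D(f, g) = sqrt( (Σ_{k=1}^{z} (f_k − g_k)²) / z ). Then the sequence t ↦ δ(F⁽ᵗ⁾) is monotonically decreasing: δ(F⁽ᵗ⁾) ≤ δ(F⁽ᵗ⁻¹⁾) for every t ≥ 1, where F⁽ᵗ⁾ is the matrix with rows f_1⁽ᵗ⁾, …, f_n⁽ᵗ⁾ and δ(M) = (1/2) · max_{i,j} Σ_k |M_{i,k} − M_{j,k}|. -/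
import Mathlib


open Finset

/-- A probability vector: nonnegative entries summing to 1. -/
def ProbVec {z : ℕ} (f : Fin z → ℝ) : Prop :=
  (∀ k, 0 ≤ f k) ∧ ∑ k, f k = 1

/-- Root-mean-square deviation between two opinions. -/
noncomputable def D {z : ℕ} (f g : Fin z → ℝ) : ℝ :=
  Real.sqrt ((∑ k, (f k - g k) ^ 2) / z)

/-- The weight that expert `i` assigns to expert `j`, given current opinions `F`:
`p_{i,j} = (ε + D(F i, F j))⁻¹ / Σ_m (ε + D(F i, F m))⁻¹`. -/
noncomputable def weight {n z : ℕ} (ε : ℝ) (F : Fin n → Fin z → ℝ) (i j : Fin n) : ℝ :=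
  (ε + D (F i) (F j))⁻¹ / ∑ m, (ε + D (F i) (F m))⁻¹

/-- The opinions after `t` rounds of the consensual updating process. -/
noncomputable def opinions {n z : ℕ} (ε : ℝ) (F0 : Fin n → Fin z → ℝ) :
    ℕ → Fin n → Fin z → ℝ
  | 0 => F0
  | t + 1 => fun i k => ∑ j, weight ε (opinions ε F0 t) i j * opinions ε F0 t j k

/-- δ(F) = (1/2) · max over pairs of rows i, j of Σ_k |F_{i,k} − F_{j,k}|. -/
noncomputable def delta {n z : ℕ} [NeZero n] (F : Fin n → Fin z → ℝ) : ℝ :=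
  (1 / 2) *
    Finset.univ.sup' Finset.univ_nonempty
      (fun p : Fin n × Fin n => ∑ k, |F p.1 k - F p.2 k|)

lemma eps_D_pos {n z : ℕ} {ε : ℝ} (hε : 0 < ε) (F : Fin n → Fin z → ℝ) (i j : Fin n) :
    0 < ε + D (F i) (F j) :=
  add_pos_of_pos_of_nonneg hε (Real.sqrt_nonneg _)

lemma weight_nonneg {n z : ℕ} {ε : ℝ} (hε : 0 < ε) (F : Fin n → Fin z → ℝ) (i j : Fin n) :
    0 ≤ weight ε F i j := by
  apply div_nonneg (inv_nonneg.mpr (eps_D_pos hε F i j).le)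
  exact Finset.sum_nonneg fun m _ => inv_nonneg.mpr (eps_D_pos hε F i m).le

lemma weight_sum {n z : ℕ} [NeZero n] {ε : ℝ} (hε : 0 < ε) (F : Fin n → Fin z → ℝ)
    (i : Fin n) : ∑ j, weight ε F i j = 1 := by
  have hpos : 0 < ∑ m, (ε + D (F i) (F m))⁻¹ :=
    Finset.sum_pos (fun m _ => inv_pos.mpr (eps_D_pos hε F i m)) Finset.univ_nonempty
  unfold weight
  rw [← Finset.sum_div, div_self hpos.ne']

/-- key contraction lemma: ℓ¹ distance between two convex combinations of the rows of `G`
is at most the ℓ¹ diameter of the rows of `G`. -/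
lemma conv_comb_dist_le {n z : ℕ} [NeZero n] (a b : Fin n → ℝ)
    (ha : ∀ m, 0 ≤ a m) (ha1 : ∑ m, a m = 1)
    (hb : ∀ m, 0 ≤ b m) (hb1 : ∑ m, b m = 1)
    (G : Fin n → Fin z → ℝ) :
    ∑ k, |(∑ m, a m * G m k) - ∑ m, b m * G m k| ≤
      Finset.univ.sup' Finset.univ_nonempty
        (fun p : Fin n × Fin n => ∑ k, |G p.1 k - G p.2 k|) := by
  set M := Finset.univ.sup' Finset.univ_nonempty
      (fun p : Fin n × Fin n => ∑ k, |G p.1 k - G p.2 k|) with hMdef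
  have hM : ∀ p q : Fin n, ∑ k, |G p k - G q k| ≤ M := fun p q =>
    Finset.le_sup' (f := fun p : Fin n × Fin n => ∑ k, |G p.1 k - G p.2 k|)
      (Finset.mem_univ (p, q))
  have hrw : ∀ k, (∑ m, a m * G m k) - ∑ m, b m * G m k
      = ∑ m, ∑ l, a m * b l * (G m k - G l k) := by
    intro k
    have : ∀ m, ∑ l, a m * b l * (G m k - G l k)
        = a m * G m k - a m * ∑ l, b l * G l k := by
      intro m
      have h2 : ∑ l, a m * b l * (G m k - G l k)
          = (∑ l, b l) * (a m * G m k) - a m * ∑ l, b l * G l k := by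
        rw [Finset.sum_mul, Finset.mul_sum, ← Finset.sum_sub_distrib]
        exact Finset.sum_congr rfl fun l _ => by ring
      rw [h2, hb1, one_mul]
    rw [Finset.sum_congr rfl fun m _ => this m, Finset.sum_sub_distrib,
      ← Finset.sum_mul, ha1, one_mul]
  calc ∑ k, |(∑ m, a m * G m k) - ∑ m, b m * G m k|
      ≤ ∑ k, ∑ m, ∑ l, a m * b l * |G m k - G l k| := by
        refine Finset.sum_le_sum fun k _ => ?_
        rw [hrw k]
        refine le_trans (Finset.abs_sum_le_sum_abs _ _) (Finset.sum_le_sum fun m _ => ?_)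
        refine le_trans (Finset.abs_sum_le_sum_abs _ _) (Finset.sum_le_sum fun l _ => ?_)
        rw [abs_mul, abs_of_nonneg (mul_nonneg (ha m) (hb l))]
    _ = ∑ m, ∑ l, a m * b l * ∑ k, |G m k - G l k| := by
        rw [Finset.sum_comm]
        refine Finset.sum_congr rfl fun m _ => ?_
        rw [Finset.sum_comm]
        exact Finset.sum_congr rfl fun l _ => (Finset.mul_sum _ _ _).symm
    _ ≤ ∑ m, ∑ l, a m * b l * M := by
        refine Finset.sum_le_sum fun m _ => Finset.sum_le_sum fun l _ => ?_
        exact mul_le_mul_of_nonneg_left (hM m l) (mul_nonneg (ha m) (hb l))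
    _ = M := by
        have h3 : ∀ m, ∑ l, a m * b l * M = a m * M := by
          intro m
          calc ∑ l, a m * b l * M = (a m * ∑ l, b l) * M := by
                rw [Finset.mul_sum, Finset.sum_mul]
            _ = a m * M := by rw [hb1, mul_one]
        rw [Finset.sum_congr rfl fun m _ => h3 m, ← Finset.sum_mul, ha1, one_mul]

theorem delta_opinions_monotone {n z : ℕ} [NeZero n] (hz : 2 ≤ z)
    {ε : ℝ} (hε : 0 < ε) (F0 : Fin n → Fin z → ℝ) (hF0 : ∀ i, ProbVec (F0 i)) :
    ∀ t : ℕ, 1 ≤ t → delta (opinions ε F0 t) ≤ delta (opinions ε F0 (t - 1)) := by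
  rintro t ht
  obtain ⟨s, rfl⟩ : ∃ s, t = s + 1 := ⟨t - 1, (Nat.succ_pred_eq_of_pos ht).symm⟩
  simp only [Nat.add_sub_cancel]
  set G := opinions ε F0 s with hG
  unfold delta
  refine mul_le_mul_of_nonneg_left ?_ (by norm_num)
  refine Finset.sup'_le _ _ fun p _ => ?_
  have hop : ∀ i k, opinions ε F0 (s + 1) i k = ∑ j, weight ε G i j * G j k := fun i k => rfl
  simp only [hop]
  exact conv_comb_dist_le _ _ (fun m => weight_nonneg hε G p.1 m) (weight_sum hε G p.1)
    (fun m => weight_nonneg hε G p.2 m) (weight_sum hε G p.2) G
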